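/- Value function bound on the terminal set: let N ≥ 1 and x̂ ∈ X_f. Define the closed-loop sequence x_0 := x̂, x_{i+1} := f^ε(x_i, μ(x_i)) and the input sequence u_μ := (μ(x_0), …, μ(x_{N−1})). Then x_i ∈ X_f for all i ∈ [0:N] (so u_μ is well defined), u_μ is ε-admissible for x̂, and V_N(x̂) ≤ J_N(x̂, u_μ) ≤ V_f(x̂). -/

import Mathlib

noncomputable section

abbrev E (n : ℕ) := EuclideanSpace ℝ (Fin n)

/-- Predicted trajectory of the surrogate model. -/
def traj {n m : ℕ} (fe : E n → E m → E n) (x0 : E n) (u : ℕ → E m) : ℕ → E n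
  | 0 => x0
  | k + 1 => fe (traj fe x0 u k) (u k)

/-- Pontryagin set difference `S ⊖ B_r`. -/
def pDiff {n : ℕ} (S : Set (E n)) (r : ℝ) : Set (E n) :=
  {x | ∀ z : E n, ‖z‖ ≤ r → x + z ∈ S}

/-- `c̄(k) = ∑_{i=0}^{k-1} L̄^i`. -/
def cbar (Lbar : ℝ) (k : ℕ) : ℝ := ∑ i ∈ Finset.range k, Lbar ^ i

/-- Quadratic form `xᵀQx` on Euclidean space. -/
def qf {n : ℕ} (Q : Matrix (Fin n) (Fin n) ℝ) (x : E n) : ℝ :=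
  dotProduct (WithLp.equiv 2 (Fin n → ℝ) x) (Q.mulVec (WithLp.equiv 2 (Fin n → ℝ) x))

/-- ε-admissibility of an input sequence `u` for initial state `xh`. -/
def Admissible {n m : ℕ} (fe : E n → E m → E n) (S Xf : Set (E n)) (U : Set (E m))
    (η Lbar : ℝ) (N : ℕ) (xh : E n) (u : ℕ → E m) : Prop :=
  (∀ k < N, u k ∈ U) ∧
  (∀ k, 1 ≤ k → k < N → traj fe xh u k ∈ pDiff S (cbar Lbar k * η)) ∧
  traj fe xh u N ∈ Xf

/-- MPC cost functional. -/
def JN {n m M : ℕ} (fe : E n → E m → E n) (Q : Matrix (Fin n) (Fin n) ℝ)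
    (R : Matrix (Fin m) (Fin m) ℝ) (P : Matrix (Fin M) (Fin M) ℝ) (Φ : E n → E M)
    (N : ℕ) (xh : E n) (u : ℕ → E m) : ℝ :=
  ∑ i ∈ Finset.range N, (qf Q (traj fe xh u i) + qf R (u i)) + qf P (Φ (traj fe xh u N))

/-- Optimal value function. -/
def VN {n m M : ℕ} (fe : E n → E m → E n) (S Xf : Set (E n)) (U : Set (E m))
    (η Lbar : ℝ) (Q : Matrix (Fin n) (Fin n) ℝ) (R : Matrix (Fin m) (Fin m) ℝ)
    (P : Matrix (Fin M) (Fin M) ℝ) (Φ : E n → E M) (N : ℕ) (xh : E n) : ℝ :=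
  sInf (JN fe Q R P Φ N xh '' {u | Admissible fe S Xf U η Lbar N xh u})


lemma qf_nonneg' {n : ℕ} {Q : Matrix (Fin n) (Fin n) ℝ} (hQ : Q.PosDef) (x : E n) :
    0 ≤ qf Q x := by
  have := hQ.posSemidef.dotProduct_mulVec_nonneg (WithLp.equiv 2 (Fin n → ℝ) x)
  simpa [qf] using this

/-- Value function bound on the terminal set. -/
theorem value_function_bound_on_terminal_set
    {n m M : ℕ} (S : Set (E n)) (U : Set (E m))
    (hScomp : IsCompact S) (hSconv : Convex ℝ S) (hS0 : (0 : E n) ∈ interior S)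
    (hUcomp : IsCompact U) (hUconv : Convex ℝ U) (hU0 : (0 : E m) ∈ interior U)
    (fe : E n → E m → E n) (Lbar : ℝ) (hL : 1 ≤ Lbar)
    (hLip : ∀ u ∈ U, ∀ x ∈ S, ∀ y ∈ S, ‖fe x u - fe y u‖ ≤ Lbar * ‖x - y‖)
    (η : ℝ) (hη : 0 ≤ η)
    (Q : Matrix (Fin n) (Fin n) ℝ) (R : Matrix (Fin m) (Fin m) ℝ)
    (hQ : Q.PosDef) (hR : R.PosDef)
    (P : Matrix (Fin M) (Fin M) ℝ) (hP : P.PosDef)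
    (Φ : E n → E M) (LΦ : ℝ) (hΦ : ∀ x y, ‖Φ x - Φ y‖ ≤ LΦ * ‖x - y‖) (hΦ0 : Φ 0 = 0)
    (c : ℝ) (hc : 0 < c) (N : ℕ) (hN : 1 ≤ N)
    (Xf : Set (E n)) (hXf : Xf = {x | qf P (Φ x) ≤ c})
    (hXfS : Xf ⊆ pDiff S (cbar Lbar N * η))
    (μ : E n → E m) (hμ0 : μ 0 = 0) (hμU : ∀ x ∈ Xf, μ x ∈ U)
    (hμdec : ∀ x ∈ Xf,
      qf P (Φ (fe x (μ x))) - qf P (Φ x) ≤ -(qf Q x + qf R (μ x)))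
    (xh : E n) (hxh : xh ∈ Xf)
    (xseq : ℕ → E n) (hx0 : xseq 0 = xh)
    (hxrec : ∀ i, xseq (i + 1) = fe (xseq i) (μ (xseq i))) :
    (∀ i ≤ N, xseq i ∈ Xf) ∧
    Admissible fe S Xf U η Lbar N xh (fun k => μ (xseq k)) ∧
    VN fe S Xf U η Lbar Q R P Φ N xh ≤ JN fe Q R P Φ N xh (fun k => μ (xseq k)) ∧
    JN fe Q R P Φ N xh (fun k => μ (xseq k)) ≤ qf P (Φ xh) := by
  -- trajectory equals xseq
  have htraj : ∀ k, traj fe xh (fun k => μ (xseq k)) k = xseq k := by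
    intro k
    induction k with
    | zero => simp [traj, hx0]
    | succ k ih => simp [traj, ih, hxrec k]
  -- invariance
  have hinv : ∀ i, xseq i ∈ Xf := by
    intro i
    induction i with
    | zero => simpa [hx0] using hxh
    | succ i ih =>
      have hdec := hμdec (xseq i) ih
      have h1 : qf P (Φ (xseq (i+1))) ≤ qf P (Φ (xseq i)) := by
        rw [hxrec i]
        nlinarith [qf_nonneg' hQ (xseq i), qf_nonneg' hR (μ (xseq i))]
      rw [hXf] at ih ⊢
      exact le_trans h1 ih
  -- telescoping bound
  have htel : ∀ k, ∑ i ∈ Finset.range k, (qf Q (xseq i) + qf R (μ (xseq i)))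
      + qf P (Φ (xseq k)) ≤ qf P (Φ xh) := by
    intro k
    induction k with
    | zero => simp [hx0]
    | succ k ih =>
      have hdec := hμdec (xseq k) (hinv k)
      rw [Finset.sum_range_succ]
      rw [hxrec k] at *
      linarith
  have hJ : JN fe Q R P Φ N xh (fun k => μ (xseq k)) ≤ qf P (Φ xh) := by
    have := htel N
    simpa [JN, htraj] using this
  have hcmono : ∀ k, k ≤ N → cbar Lbar k ≤ cbar Lbar N := by
    intro k hk
    apply Finset.sum_le_sum_of_subset_of_nonneg (Finset.range_subset_range.2 hk)
    intro i _ _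
    positivity
  have hadm : Admissible fe S Xf U η Lbar N xh (fun k => μ (xseq k)) := by
    refine ⟨fun k _ => hμU _ (hinv k), ?_, ?_⟩
    · intro k _ hkN
      rw [htraj]
      intro z hz
      exact hXfS (hinv k) z (hz.trans (by
        have := hcmono k hkN.le
        nlinarith))
    · rw [htraj]; exact hinv N
  refine ⟨fun i _ => hinv i, hadm, ?_, hJ⟩
  apply csInf_le
  · refine ⟨0, ?_⟩
    rintro y ⟨u, -, rfl⟩
    have h1 : 0 ≤ ∑ i ∈ Finset.range N, (qf Q (traj fe xh u i) + qf R (u i)) :=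
      Finset.sum_nonneg fun i _ => add_nonneg (qf_nonneg' hQ _) (qf_nonneg' hR _)
    have h2 := qf_nonneg' hP (Φ (traj fe xh u N))
    simp only [JN]
    linarith
  · exact ⟨_, hadm, rfl⟩
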